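/- Let n, l ≥ 1 and let k_1,…,k_l be integers with 1 ≤ k_i ≤ n. In the polynomial ring ℂ[λ_{i,j} : 1 ≤ i ≤ l, 1 ≤ j ≤ n] the identity ∏_{F≠G} Σ_{i=1}^l ( Σ_{j∈F(i)} λ_{i,j} − Σ_{j∈G(i)} λ_{i,j} ) = ∏_{k'} ( ∏_{(F,G)} Σ_{i=1}^l ( Σ_{j∈F(i)} λ_{i,j} − Σ_{j∈G(i)} λ_{i,j} ) )^{∏_i C(n−2k'_i, k_i−k'_i)} holds, where on the left-hand side (F,G) ranges over all ordered pairs of distinct functions assigning to each i ∈ {1,…,l} a k_i-element subset of {1,…,n}; on the right-hand side k' = (k'_1,…,k'_l) ranges over all tuples of integers with 0 ≤ k'_i ≤ k_i that are not all zero, and for each such k', (F,G) ranges over all ordered pairs of functions assigning to each i ∈ {1,…,l} a k'_i-element subset of {1,…,n} such that F(i) ∩ G(i) = ∅ for every i. -/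
import Mathlib

open MvPolynomial Finset

namespace Stmt14

variable {α : Type*} [DecidableEq α]

lemma set1 {F' G' C : Finset α} (hFG : ∀ x ∈ F', x ∉ G') (hCF : ∀ x ∈ C, x ∉ F')
    (hCG : ∀ x ∈ C, x ∉ G') : (F' ∪ C) \ (G' ∪ C) = F' := by
  ext x
  have h1 := hFG x; have h2 := hCF x; have h3 := hCG x
  simp only [mem_sdiff, mem_union]
  tauto

lemma set2 {F' G' C : Finset α} (hFG : ∀ x ∈ F', x ∉ G') (hCF : ∀ x ∈ C, x ∉ F')
    (hCG : ∀ x ∈ C, x ∉ G') : (F' ∪ C) ∩ (G' ∪ C) = C := by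
  ext x
  have h1 := hFG x; have h2 := hCF x; have h3 := hCG x
  simp only [mem_inter, mem_union]
  tauto

variable {n l : ℕ} {k : Fin l → ℕ}

noncomputable def lf (n l : ℕ) (F G : Fin l → Finset (Fin n)) : MvPolynomial (Fin l × Fin n) ℂ :=
  ∑ i : Fin l, ((∑ j ∈ F i, X (i, j)) - ∑ j ∈ G i, X (i, j))

lemma lf_sdiff (F G : Fin l → Finset (Fin n)) :
    lf n l F G = lf n l (fun i => F i \ G i) (fun i => G i \ F i) := by
  unfold lf
  refine Finset.sum_congr rfl fun i _ => ?_
  have e1 : (∑ j ∈ F i, X (i, j) : MvPolynomial (Fin l × Fin n) ℂ)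
      = ∑ j ∈ F i \ G i, X (i, j) + ∑ j ∈ F i ∩ G i, X (i, j) := by
    rw [← Finset.sum_union (disjoint_sdiff_inter _ _), sdiff_union_inter]
  have e2 : (∑ j ∈ G i, X (i, j) : MvPolynomial (Fin l × Fin n) ℂ)
      = ∑ j ∈ G i \ F i, X (i, j) + ∑ j ∈ G i ∩ F i, X (i, j) := by
    rw [← Finset.sum_union (disjoint_sdiff_inter _ _), sdiff_union_inter]
  rw [e1, e2, Finset.inter_comm (G i)]
  ring

def Phi (n l : ℕ) (k : Fin l → ℕ)
    (x : (∀ i, {s : Finset (Fin n) // s.card = k i}) ×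
         (∀ i, {s : Finset (Fin n) // s.card = k i})) :
    Σ k' : ∀ i : Fin l, Fin (k i + 1),
      (∀ i, {s : Finset (Fin n) // s.card = (k' i : ℕ)}) ×
      (∀ i, {s : Finset (Fin n) // s.card = (k' i : ℕ)}) :=
  ⟨fun i => ⟨((x.1 i).1 \ (x.2 i).1).card, Nat.lt_succ_of_le (by
      calc ((x.1 i).1 \ (x.2 i).1).card ≤ (x.1 i).1.card := card_le_card sdiff_subset
        _ = k i := (x.1 i).2)⟩,
   (fun i => ⟨(x.1 i).1 \ (x.2 i).1, rfl⟩,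
    fun i => ⟨(x.2 i).1 \ (x.1 i).1,
      (Finset.card_sdiff_comm (by rw [(x.2 i).2, (x.1 i).2])).symm⟩)⟩

lemma Phi_eq {x : (∀ i, {s : Finset (Fin n) // s.card = k i}) ×
         (∀ i, {s : Finset (Fin n) // s.card = k i})}
    {k' : ∀ i : Fin l, Fin (k i + 1)}
    {F' G' : ∀ i, {s : Finset (Fin n) // s.card = (k' i : ℕ)}}
    (h1 : ∀ i, (x.1 i).1 \ (x.2 i).1 = (F' i).1)
    (h2 : ∀ i, (x.2 i).1 \ (x.1 i).1 = (G' i).1) :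
    Phi n l k x = ⟨k', (F', G')⟩ := by
  have hk : (Phi n l k x).1 = k' := by
    funext i
    exact Fin.ext (by simp only [Phi]; rw [h1 i, (F' i).2])
  obtain rfl : k' = (Phi n l k x).1 := hk.symm
  have hF : (Phi n l k x).2.1 = F' := _root_.funext fun i => Subtype.ext (h1 i)
  have hG : (Phi n l k x).2.2 = G' := _root_.funext fun i => Subtype.ext (h2 i)
  exact congrArg (Sigma.mk (Phi n l k x).1) (Prod.ext hF hG)

lemma Phi_eq_iff {x : (∀ i, {s : Finset (Fin n) // s.card = k i}) ×
         (∀ i, {s : Finset (Fin n) // s.card = k i})}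
    {k' : ∀ i : Fin l, Fin (k i + 1)}
    {F' G' : ∀ i, {s : Finset (Fin n) // s.card = (k' i : ℕ)}} :
    Phi n l k x = ⟨k', (F', G')⟩ ↔
      (∀ i, (x.1 i).1 \ (x.2 i).1 = (F' i).1) ∧ (∀ i, (x.2 i).1 \ (x.1 i).1 = (G' i).1) := by
  constructor
  · intro h
    rw [Sigma.ext_iff] at h
    obtain ⟨hfst, hsnd⟩ := h
    simp only [Phi] at hfst hsnd
    subst hfst
    have h2 := eq_of_heq hsnd
    rw [Prod.mk.injEq] at h2
    constructor
    · intro i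
      exact congrArg Subtype.val (congrFun h2.1 i)
    · intro i
      exact congrArg Subtype.val (congrFun h2.2 i)
  · rintro ⟨h1, h2⟩
    exact Phi_eq h1 h2


lemma fiber_card (hkn : ∀ i, k i ≤ n) (k' : ∀ i : Fin l, Fin (k i + 1))
    (F' G' : ∀ i, {s : Finset (Fin n) // s.card = (k' i : ℕ)})
    (hdisj : ∀ i, (F' i).1 ∩ (G' i).1 = ∅)
    (hne : ∃ i, (k' i : ℕ) ≠ 0) :
    ((Finset.univ.filter
        (fun p : (∀ i, {s : Finset (Fin n) // s.card = k i}) ×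
            (∀ i, {s : Finset (Fin n) // s.card = k i}) => p.1 ≠ p.2)).filter
        (fun x => Phi n l k x = ⟨k', (F', G')⟩)).card
      = ∏ i, Nat.choose (n - 2 * (k' i : ℕ)) (k i - (k' i : ℕ)) := by
  classical
  -- disjointness facts
  have hFG : ∀ i, ∀ x ∈ (F' i).1, x ∉ (G' i).1 := by
    intro i x hx hx'
    have : x ∈ (F' i).1 ∩ (G' i).1 := mem_inter.mpr ⟨hx, hx'⟩
    rw [hdisj i] at this
    exact absurd this (notMem_empty x)
  set T := Fintype.piFinset (fun i =>
    Finset.powersetCard (k i - (k' i : ℕ)) (Finset.univ \ ((F' i).1 ∪ (G' i).1))) with hT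
  have hcompl : ∀ i, (Finset.univ \ ((F' i).1 ∪ (G' i).1)).card = n - 2 * (k' i : ℕ) := by
    intro i
    rw [Finset.card_sdiff_of_subset (subset_univ _), Finset.card_univ, Fintype.card_fin,
      Finset.card_union_of_disjoint (disjoint_iff_inter_eq_empty.mpr (hdisj i)),
      (F' i).2, (G' i).2]
    omega
  have hTcard : T.card = ∏ i, Nat.choose (n - 2 * (k' i : ℕ)) (k i - (k' i : ℕ)) := by
    rw [hT, Fintype.card_piFinset]
    refine Finset.prod_congr rfl fun i _ => ?_
    rw [Finset.card_powersetCard, hcompl i]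
  rw [← hTcard]
  refine Finset.card_bij' (fun x _ => fun a => (x.1 a).1 ∩ (x.2 a).1)
    (fun C hC => ?_) ?_ ?_ ?_ ?_
  · -- backward map
    refine (fun a => ⟨(F' a).1 ∪ C a, ?_⟩, fun a => ⟨(G' a).1 ∪ C a, ?_⟩)
    · have hmem := Fintype.mem_piFinset.mp hC a
      rw [Finset.mem_powersetCard] at hmem
      have hdisjFC : Disjoint (F' a).1 (C a) := by
        refine Finset.disjoint_left.mpr fun x hx hx' => ?_
        have := hmem.1 hx'
        rw [mem_sdiff, mem_union] at this
        exact this.2 (Or.inl hx)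
      rw [Finset.card_union_of_disjoint hdisjFC, (F' a).2, hmem.2]
      have := (k' a).isLt
      omega
    · have hmem := Fintype.mem_piFinset.mp hC a
      rw [Finset.mem_powersetCard] at hmem
      have hdisjGC : Disjoint (G' a).1 (C a) := by
        refine Finset.disjoint_left.mpr fun x hx hx' => ?_
        have := hmem.1 hx'
        rw [mem_sdiff, mem_union] at this
        exact this.2 (Or.inr hx)
      rw [Finset.card_union_of_disjoint hdisjGC, (G' a).2, hmem.2]
      have := (k' a).isLt
      omega
  · -- forward map lands in T
    intro x hx
    rw [Finset.mem_filter] at hx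
    obtain ⟨hx1, hx2⟩ := hx
    rw [Finset.mem_filter] at hx1
    obtain ⟨h1, h2⟩ := Phi_eq_iff.mp hx2
    rw [Fintype.mem_piFinset]
    intro a
    rw [Finset.mem_powersetCard]
    constructor
    · intro y hy
      rw [mem_inter] at hy
      rw [mem_sdiff, mem_union, ← h1 a, ← h2 a]
      refine ⟨mem_univ y, ?_⟩
      rintro (hy' | hy')
      · exact (mem_sdiff.mp hy').2 hy.2
      · exact (mem_sdiff.mp hy').2 hy.1
    · have hsplit : ((x.1 a).1 \ (x.2 a).1).card + ((x.1 a).1 ∩ (x.2 a).1).card = k a := by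
        rw [← Finset.card_union_of_disjoint (disjoint_sdiff_inter _ _), sdiff_union_inter,
          (x.1 a).2]
      have hcard : ((x.1 a).1 \ (x.2 a).1).card = (k' a : ℕ) := by
        rw [h1 a, (F' a).2]
      show ((x.1 a).1 ∩ (x.2 a).1).card = k a - (k' a : ℕ)
      omega
  · -- backward map lands in fiber
    intro C hC
    have hCmem : ∀ a, C a ⊆ Finset.univ \ ((F' a).1 ∪ (G' a).1) :=
      fun a => (Finset.mem_powersetCard.mp (Fintype.mem_piFinset.mp hC a)).1
    have hCF : ∀ a, ∀ x ∈ C a, x ∉ (F' a).1 := by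
      intro a x hx hx'
      have := hCmem a hx
      rw [mem_sdiff, mem_union] at this
      exact this.2 (Or.inl hx')
    have hCG : ∀ a, ∀ x ∈ C a, x ∉ (G' a).1 := by
      intro a x hx hx'
      have := hCmem a hx
      rw [mem_sdiff, mem_union] at this
      exact this.2 (Or.inr hx')
    rw [Finset.mem_filter]
    constructor
    · rw [Finset.mem_filter]
      refine ⟨mem_univ _, ?_⟩
      obtain ⟨i0, hi0⟩ := hne
      intro heq
      have hval : ((F' i0).1 ∪ C i0 : Finset (Fin n)) = (G' i0).1 ∪ C i0 :=
        congrArg Subtype.val (congrFun heq i0)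
      have hFne : (F' i0).1.Nonempty := by
        rw [← Finset.card_pos, (F' i0).2]
        omega
      obtain ⟨y, hy⟩ := hFne
      have hy2 : y ∈ ((G' i0).1 ∪ C i0 : Finset (Fin n)) := by
        rw [← hval]; exact mem_union.mpr (Or.inl hy)
      rcases mem_union.mp hy2 with hy' | hy'
      · exact hFG i0 y hy hy'
      · exact hCF i0 y hy' hy
    · refine Phi_eq_iff.mpr ⟨fun a => ?_, fun a => ?_⟩
      · exact set1 (hFG a) (hCF a) (hCG a)
      · have hGF : ∀ x ∈ (G' a).1, x ∉ (F' a).1 := fun x hx hx' => hFG a x hx' hx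
        exact set1 hGF (hCG a) (hCF a)
  · -- left inverse
    intro x hx
    rw [Finset.mem_filter] at hx
    obtain ⟨h1, h2⟩ := Phi_eq_iff.mp hx.2
    refine Prod.ext (_root_.funext fun a => Subtype.ext ?_) (_root_.funext fun a => Subtype.ext ?_)
    · show (F' a).1 ∪ ((x.1 a).1 ∩ (x.2 a).1) = (x.1 a).1
      rw [← h1 a, sdiff_union_inter]
    · show (G' a).1 ∪ ((x.1 a).1 ∩ (x.2 a).1) = (x.2 a).1
      rw [← h2 a, Finset.inter_comm, sdiff_union_inter]
  · -- right inverse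
    intro C hC
    funext a
    have hCmem : C a ⊆ Finset.univ \ ((F' a).1 ∪ (G' a).1) :=
      (Finset.mem_powersetCard.mp (Fintype.mem_piFinset.mp hC a)).1
    have hCF : ∀ x ∈ C a, x ∉ (F' a).1 := by
      intro x hx hx'
      have := hCmem hx
      rw [mem_sdiff, mem_union] at this
      exact this.2 (Or.inl hx')
    have hCG : ∀ x ∈ C a, x ∉ (G' a).1 := by
      intro x hx hx'
      have := hCmem hx
      rw [mem_sdiff, mem_union] at this
      exact this.2 (Or.inr hx')
    show ((F' a).1 ∪ C a) ∩ ((G' a).1 ∪ C a) = C a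
    exact set2 (hFG a) hCF hCG

end Stmt14


open Stmt14 in
/-- in `ℂ[λ_{i,j} : 1 ≤ i ≤ l, 1 ≤ j ≤ n]`,
`∏_{F ≠ G} ∑_i (∑_{j ∈ F(i)} λ_{i,j} − ∑_{j ∈ G(i)} λ_{i,j})` (where `F, G` assign to
each `i` a `k_i`-element subset of `[n]`) equals
`∏_{k'} (∏_{(F,G)} ∑_i (∑_{j ∈ F(i)} λ_{i,j} − ∑_{j ∈ G(i)} λ_{i,j}))^{∏_i C(n−2k'_i, k_i−k'_i)}`,
where `k' = (k'_1, …, k'_l)` ranges over tuples with `0 ≤ k'_i ≤ k_i`, not all zero, and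
`F, G` assign to each `i` disjoint `k'_i`-element subsets of `[n]`. -/
theorem stmt14 (n l : ℕ) (hn : 1 ≤ n) (hl : 1 ≤ l) (k : Fin l → ℕ)
    (hk : ∀ i, 1 ≤ k i ∧ k i ≤ n) :
    (∏ p ∈ Finset.univ.filter
        (fun p : (∀ i, {s : Finset (Fin n) // s.card = k i}) ×
            (∀ i, {s : Finset (Fin n) // s.card = k i}) => p.1 ≠ p.2),
      ∑ i : Fin l,
        (((∑ j ∈ (p.1 i).1, X (i, j)) - ∑ j ∈ (p.2 i).1, X (i, j)) :
          MvPolynomial (Fin l × Fin n) ℂ)) =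
    ∏ k' ∈ Finset.univ.filter
        (fun k' : ∀ i : Fin l, Fin (k i + 1) => ∃ i, (k' i : ℕ) ≠ 0),
      (∏ p ∈ Finset.univ.filter
          (fun p : (∀ i, {s : Finset (Fin n) // s.card = (k' i : ℕ)}) ×
              (∀ i, {s : Finset (Fin n) // s.card = (k' i : ℕ)}) =>
            ∀ i, (p.1 i).1 ∩ (p.2 i).1 = ∅),
        ∑ i : Fin l,
          (((∑ j ∈ (p.1 i).1, X (i, j)) - ∑ j ∈ (p.2 i).1, X (i, j)) :
            MvPolynomial (Fin l × Fin n) ℂ)) ^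
        (∏ i, Nat.choose (n - 2 * (k' i : ℕ)) (k i - (k' i : ℕ))) := by
  classical
  have hkn : ∀ i, k i ≤ n := fun i => (hk i).2
  let A : Finset ((∀ i, {s : Finset (Fin n) // s.card = k i}) ×
      (∀ i, {s : Finset (Fin n) // s.card = k i})) :=
    Finset.univ.filter (fun p => p.1 ≠ p.2)
  let Kf : Finset (∀ i : Fin l, Fin (k i + 1)) :=
    Finset.univ.filter (fun k' => ∃ i, (k' i : ℕ) ≠ 0)
  let Pf : ∀ k' : ∀ i : Fin l, Fin (k i + 1),
      Finset ((∀ i, {s : Finset (Fin n) // s.card = (k' i : ℕ)}) ×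
        (∀ i, {s : Finset (Fin n) // s.card = (k' i : ℕ)})) :=
    fun k' => Finset.univ.filter (fun p => ∀ i, (p.1 i).1 ∩ (p.2 i).1 = ∅)
  let S := Kf.sigma Pf
  have hmaps : ∀ x ∈ A, Phi n l k x ∈ S := by
    intro x hx
    rw [Finset.mem_filter] at hx
    rw [Finset.mem_sigma]
    constructor
    · rw [Finset.mem_filter]
      refine ⟨Finset.mem_univ _, ?_⟩
      have hex : ∃ i, x.1 i ≠ x.2 i := by
        by_contra hcon
        push_neg at hcon
        exact hx.2 (_root_.funext hcon)
      obtain ⟨i, hi⟩ := hex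
      refine ⟨i, ?_⟩
      show ((x.1 i).1 \ (x.2 i).1).card ≠ 0
      intro h0
      have hemp : (x.1 i).1 \ (x.2 i).1 = ∅ := Finset.card_eq_zero.mp h0
      have hsub : (x.1 i).1 ⊆ (x.2 i).1 := Finset.sdiff_eq_empty_iff_subset.mp hemp
      have heq : (x.1 i).1 = (x.2 i).1 :=
        Finset.eq_of_subset_of_card_le hsub (by rw [(x.2 i).2, (x.1 i).2])
      exact hi (Subtype.ext heq)
    · rw [Finset.mem_filter]
      refine ⟨Finset.mem_univ _, fun i => ?_⟩
      show ((x.1 i).1 \ (x.2 i).1) ∩ ((x.2 i).1 \ (x.1 i).1) = ∅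
      ext y
      simp only [Finset.mem_inter, Finset.mem_sdiff, Finset.notMem_empty, iff_false]
      tauto
  have key := Finset.prod_fiberwise_of_maps_to hmaps
    (fun p => lf n l (fun i => (p.1 i).1) (fun i => (p.2 i).1))
  calc (∏ p ∈ A, ∑ i : Fin l,
        (((∑ j ∈ (p.1 i).1, X (i, j)) - ∑ j ∈ (p.2 i).1, X (i, j)) :
          MvPolynomial (Fin l × Fin n) ℂ))
      = ∏ p ∈ A, lf n l (fun i => (p.1 i).1) (fun i => (p.2 i).1) :=
        Finset.prod_congr rfl (fun _ _ => rfl)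
    _ = ∏ z ∈ S, ∏ x ∈ A.filter (fun x => Phi n l k x = z),
          lf n l (fun i => (x.1 i).1) (fun i => (x.2 i).1) := key.symm
    _ = ∏ z ∈ S, (lf n l (fun i => (z.2.1 i).1) (fun i => (z.2.2 i).1)) ^
          (∏ i, Nat.choose (n - 2 * (z.1 i : ℕ)) (k i - (z.1 i : ℕ))) := by
        refine Finset.prod_congr rfl fun z hz => ?_
        obtain ⟨k', F', G'⟩ := z
        rw [Finset.mem_sigma] at hz
        obtain ⟨hz1, hz2⟩ := hz
        rw [Finset.mem_filter] at hz1 hz2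
        have hne : ∃ i, (k' i : ℕ) ≠ 0 := hz1.2
        have hdisj : ∀ i, (F' i).1 ∩ (G' i).1 = ∅ := hz2.2
        have hconst : ∀ x ∈ A.filter (fun x => Phi n l k x = ⟨k', (F', G')⟩),
            lf n l (fun i => (x.1 i).1) (fun i => (x.2 i).1)
              = lf n l (fun i => (F' i).1) (fun i => (G' i).1) := by
          intro x hx
          rw [Finset.mem_filter] at hx
          obtain ⟨h1, h2⟩ := Phi_eq_iff.mp hx.2
          rw [lf_sdiff]
          congr 1
          · exact _root_.funext h1
          · exact _root_.funext h2
        rw [Finset.prod_congr rfl hconst, Finset.prod_const]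
        congr 1
        exact fiber_card hkn k' F' G' hdisj hne
    _ = ∏ k' ∈ Kf, ∏ p ∈ Pf k',
          (lf n l (fun i => (p.1 i).1) (fun i => (p.2 i).1)) ^
          (∏ i, Nat.choose (n - 2 * (k' i : ℕ)) (k i - (k' i : ℕ))) :=
        (Finset.prod_sigma' Kf Pf (fun k' p =>
          lf n l (fun i => (p.1 i).1) (fun i => (p.2 i).1) ^
          (∏ i, Nat.choose (n - 2 * (k' i : ℕ)) (k i - (k' i : ℕ))))).symm
    _ = _ := by
        refine Finset.prod_congr rfl fun k' _ => ?_
        rw [Finset.prod_pow]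
        rfl
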